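/- Let N, d₁, d₂, k₊, k₋ be positive reals and set r = k₊/k₋ and q_R = r/(1 + r + d₂/d₁). Define n̄_RC = N q_R, σ²_RC = N q_R (1 − q_R), n̄_CAT = r · N d₁/(d₁ + d₂), and σ²_CAT = n̄_CAT + (k₊²/(k₋² + (d₁+d₂)k₋)) · N d₁ d₂/(d₁+d₂)². Then σ²_CAT > n̄_CAT > n̄_RC > σ²_RC. -/

import Mathlib

/-- Comparison of the steady-state RC and CAT receiver outputs in the two-voxel network
(Example 2): with `r = k₊/k₋`, `q_R = r/(1 + r + d₂/d₁)`, `n̄_RC = N q_R`,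
`σ²_RC = N q_R (1 − q_R)`, `n̄_CAT = r N d₁/(d₁+d₂)` and
`σ²_CAT = n̄_CAT + (k₊²/(k₋² + (d₁+d₂)k₋)) N d₁ d₂/(d₁+d₂)²`, we have
`σ²_CAT > n̄_CAT > n̄_RC > σ²_RC`. -/
theorem rc_cat_comparison (N d₁ d₂ kp km : ℝ)
    (hN : 0 < N) (hd₁ : 0 < d₁) (hd₂ : 0 < d₂) (hkp : 0 < kp) (hkm : 0 < km) :
    let r := kp / km
    let qR := r / (1 + r + d₂ / d₁)
    let nRC := N * qR
    let vRC := N * qR * (1 - qR)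
    let nCAT := r * (N * d₁ / (d₁ + d₂))
    let vCAT := nCAT + (kp ^ 2 / (km ^ 2 + (d₁ + d₂) * km)) * (N * d₁ * d₂ / (d₁ + d₂) ^ 2)
    vCAT > nCAT ∧ nCAT > nRC ∧ nRC > vRC := by
  intro r qR nRC vRC nCAT vCAT
  have hd12 : 0 < d₁ + d₂ := by linarith
  have hr : 0 < r := div_pos hkp hkm
  have hden : 0 < 1 + r + d₂ / d₁ := by positivity
  have hqR : 0 < qR := div_pos hr hden
  have hqR1 : qR < 1 := by
    rw [div_lt_one hden]
    have : 0 < 1 + d₂ / d₁ := by positivity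
    linarith
  refine ⟨?_, ?_, ?_⟩
  · have : 0 < (kp ^ 2 / (km ^ 2 + (d₁ + d₂) * km)) * (N * d₁ * d₂ / (d₁ + d₂) ^ 2) := by
      positivity
    simp only [vCAT]
    linarith
  · show r * (N * d₁ / (d₁ + d₂)) > N * qR
    have hq : qR = r * d₁ / (d₁ + d₂ + r * d₁) := by
      show r / (1 + r + d₂ / d₁) = r * d₁ / (d₁ + d₂ + r * d₁)
      field_simp [qR]
      ring
    rw [hq, gt_iff_lt, mul_div_assoc, mul_div_assoc]
    have key : d₁ / (d₁ + d₂ + r * d₁) < d₁ / (d₁ + d₂) :=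
      div_lt_div_of_pos_left hd₁ hd12 (by nlinarith [mul_pos hr hd₁])
    calc N * (r * (d₁ / (d₁ + d₂ + r * d₁))) < N * (r * (d₁ / (d₁ + d₂))) := by
          apply mul_lt_mul_of_pos_left _ hN
          exact mul_lt_mul_of_pos_left key hr
      _ = r * (N * (d₁ / (d₁ + d₂))) := by ring
  · show N * qR > N * qR * (1 - qR)
    nlinarith [mul_pos hN hqR]
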